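/- Let n ≥ 1 be an integer, 0 < a ≤ 1, and let μ be a Borel probability measure on ℝⁿ. Then there are only finitely many linear subspaces E ⊆ ℝⁿ that are a-basic for μ, where E is a-basic if μ(E) ≥ a and μ(F) < a for every proper subspace F ⊊ E. -/

import Mathlib

open MeasureTheory

/-- A subspace `E` is `a`-basic for `μ` if `μ(E) ≥ a` while `μ(F) < a` for every proper
subspace `F ⊊ E`. -/
def IsBasic {n : ℕ} (μ : Measure (EuclideanSpace ℝ (Fin n))) (a : ℝ)
    (E : Submodule ℝ (EuclideanSpace ℝ (Fin n))) : Prop :=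
  ENNReal.ofReal a ≤ μ (↑E : Set (EuclideanSpace ℝ (Fin n))) ∧
    ∀ F : Submodule ℝ (EuclideanSpace ℝ (Fin n)), F < E →
      μ (↑F : Set (EuclideanSpace ℝ (Fin n))) < ENNReal.ofReal a

namespace Stmt16Aux

open Filter Metric Module

variable {X : Type*} [NormedAddCommGroup X] [InnerProductSpace ℝ X]
  [FiniteDimensional ℝ X] [MeasurableSpace X] [BorelSpace X]

/-- The conical `ε`-neighborhood of a subspace. -/
def cone (V : Submodule ℝ X) (ε : ℝ) : Set X := {x | infDist x (V : Set X) ≤ ε * ‖x‖}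

lemma isClosed_cone (V : Submodule ℝ X) (ε : ℝ) : IsClosed (cone V ε) :=
  isClosed_le (continuous_infDist_pt _) (continuous_const.mul continuous_norm)

lemma subset_cone (V : Submodule ℝ X) {ε : ℝ} (hε : 0 ≤ ε) : (V : Set X) ⊆ cone V ε := by
  intro x hx
  have : infDist x (V : Set X) = 0 := infDist_zero_of_mem hx
  simp only [cone, Set.mem_setOf_eq, this]
  positivity

lemma antitone_cone (V : Submodule ℝ X) :
    Antitone (fun m : ℕ => cone V (1 / (m + 1))) := by
  intro m m' h x hx
  simp only [cone, Set.mem_setOf_eq] at hx ⊢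
  refine hx.trans (mul_le_mul_of_nonneg_right ?_ (norm_nonneg x))
  have h1 : (m : ℝ) + 1 ≤ (m' : ℝ) + 1 := by exact_mod_cast Nat.add_le_add_right h 1
  exact one_div_le_one_div_of_le (by positivity) h1

lemma iInter_cone (V : Submodule ℝ X) :
    ⋂ m : ℕ, cone V (1 / (m + 1)) = (V : Set X) := by
  ext x
  constructor
  · intro hx
    simp only [Set.mem_iInter] at hx
    have h0 : infDist x (V : Set X) ≤ 0 := by
      have ht : Filter.Tendsto (fun m : ℕ => (1 / (m + 1) : ℝ) * ‖x‖) atTop (nhds 0) := by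
        simpa using tendsto_one_div_add_atTop_nhds_zero_nat.mul_const ‖x‖
      exact ge_of_tendsto' ht fun m => hx m
    have hmem : x ∈ closure (V : Set X) := by
      rw [Metric.mem_closure_iff_infDist_zero ⟨0, V.zero_mem⟩]
      exact le_antisymm h0 infDist_nonneg
    rwa [(Submodule.closed_of_finiteDimensional V).closure_eq] at hmem
  · intro hx
    exact Set.mem_iInter.2 fun m => subset_cone V (by positivity) hx

lemma tendsto_measure_cone (μ : Measure X) [IsFiniteMeasure μ] (V : Submodule ℝ X) :
    Tendsto (fun m : ℕ => μ (cone V (1 / (m + 1)))) atTop (nhds (μ (V : Set X))) := by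
  have h := tendsto_measure_iInter_atTop (μ := μ) (s := fun m : ℕ => cone V (1 / (m + 1)))
    (fun m => (isClosed_cone V _).measurableSet.nullMeasurableSet) (antitone_cone V)
    ⟨0, measure_ne_top μ _⟩
  rwa [iInter_cone] at h

lemma tendsto_measure_cone_diff (μ : Measure X) [IsFiniteMeasure μ] (V : Submodule ℝ X) :
    Tendsto (fun m : ℕ => μ (cone V (1 / (m + 1)) \ (V : Set X))) atTop (nhds 0) := by
  have hV : MeasurableSet (V : Set X) := (Submodule.closed_of_finiteDimensional V).measurableSet
  have h := tendsto_measure_iInter_atTop (μ := μ)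
    (s := fun m : ℕ => cone V (1 / (m + 1)) \ (V : Set X))
    (fun m => ((isClosed_cone V _).measurableSet.diff hV).nullMeasurableSet)
    (fun m m' hmm => Set.diff_subset_diff_left (antitone_cone V hmm))
    ⟨0, measure_ne_top μ _⟩
  have hI : ⋂ m : ℕ, (cone V (1 / (m + 1)) \ (V : Set X)) = ∅ := by
    apply Set.eq_empty_iff_forall_notMem.2
    intro x hx
    rw [Set.mem_iInter] at hx
    have hxV : x ∈ (V : Set X) := by
      rw [← iInter_cone V]
      exact Set.mem_iInter.2 fun m => (hx m).1
    exact (hx 0).2 hxV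
  rw [hI] at h
  simpa [Function.comp_def] using h

/-- Compactness extraction: from a sequence of `d`-dimensional subspaces, extract a
subsequence converging (in a conical sense) to a `d`-dimensional subspace `V`. -/
lemma extract (F : ℕ → Submodule ℝ X) (d : ℕ) (hd : ∀ k, finrank ℝ (F k) = d) :
    ∃ φ : ℕ → ℕ, StrictMono φ ∧ ∃ V : Submodule ℝ X, finrank ℝ V = d ∧
      ∀ ε > 0, ∀ᶠ k in atTop, (F (φ k) : Set X) ⊆ cone V ε := by
  -- orthonormal bases of the subspaces, seen as families in X
  let ob : ∀ k, OrthonormalBasis (Fin d) ℝ (F k) :=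
    fun k => (stdOrthonormalBasis ℝ (F k)).reindex (finCongr (hd k))
  let c : ℕ → Fin d → X := fun k i => (ob k i : X)
  have hcon : ∀ k, Orthonormal ℝ (c k) := by
    intro k
    rw [orthonormal_iff_ite]
    intro i j
    have := (ob k).orthonormal
    rw [orthonormal_iff_ite] at this
    have h2 := this i j
    rwa [Submodule.coe_inner] at h2
  -- extract a convergent subsequence
  have hbdd : ∀ k, c k ∈ Metric.closedBall (0 : Fin d → X) 1 := by
    intro k
    rw [mem_closedBall_zero_iff]
    refine pi_norm_le_iff_of_nonneg zero_le_one |>.2 fun i => ?_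
    rw [(hcon k).1 i]
  obtain ⟨v, -, φ, hφ, hconv⟩ :=
    tendsto_subseq_of_bounded Metric.isBounded_closedBall hbdd
  have hcoord : ∀ i, Tendsto (fun k => c (φ k) i) atTop (nhds (v i)) :=
    fun i => ((continuous_apply i).tendsto v).comp hconv
  -- the limit family is orthonormal
  have hvon : Orthonormal ℝ v := by
    rw [orthonormal_iff_ite]
    intro i j
    have h1 : Tendsto (fun k => (inner ℝ (c (φ k) i) (c (φ k) j) : ℝ)) atTop
        (nhds (inner ℝ (v i) (v j))) := ((hcoord i).inner (hcoord j))
    have h2 : ∀ k, (inner ℝ (c (φ k) i) (c (φ k) j) : ℝ) = if i = j then 1 else 0 := by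
      intro k
      have := hcon (φ k)
      rw [orthonormal_iff_ite] at this
      exact this i j
    simp only [h2] at h1
    exact tendsto_nhds_unique h1 tendsto_const_nhds
  refine ⟨φ, hφ, Submodule.span ℝ (Set.range v), ?_, ?_⟩
  · rw [finrank_span_eq_card hvon.linearIndependent, Fintype.card_fin]
  · intro ε hε
    have hsum : Tendsto (fun k => ∑ i : Fin d, ‖c (φ k) i - v i‖) atTop (nhds 0) := by
      have : Tendsto (fun k => ∑ i : Fin d, ‖c (φ k) i - v i‖) atTop
          (nhds (∑ i : Fin d, ‖v i - v i‖)) :=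
        tendsto_finset_sum _ fun i _ => ((hcoord i).sub tendsto_const_nhds).norm
      simpa using this
    filter_upwards [hsum.eventually_lt_const hε] with k hk x hx
    -- expand x in the orthonormal basis of F (φ k)
    set r : Fin d → ℝ := fun i => inner ℝ (c (φ k) i) x with hr
    have hx1 : x = ∑ i : Fin d, r i • c (φ k) i := by
      have h2 : ∀ i, (ob (φ k)).repr ⟨x, hx⟩ i = r i := by
        intro i
        rw [(ob (φ k)).repr_apply_apply, Submodule.coe_inner]
      have h1 := congrArg (Subtype.val) ((ob (φ k)).sum_repr ⟨x, hx⟩)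
      rw [Submodule.coe_sum] at h1
      simp only [SetLike.val_smul] at h1
      rw [← h1]
      exact (Finset.sum_congr rfl fun i _ => by rw [h2 i]).symm
    -- compare with the corresponding combination of the limit vectors
    set y : X := ∑ i : Fin d, r i • v i with hy
    have hyV : y ∈ Submodule.span ℝ (Set.range v) :=
      Submodule.sum_mem _ fun i _ => Submodule.smul_mem _ _
        (Submodule.subset_span (Set.mem_range_self i))
    have hdist : dist x y ≤ (∑ i : Fin d, ‖c (φ k) i - v i‖) * ‖x‖ := by
      have hxy : x - y = ∑ i : Fin d, r i • (c (φ k) i - v i) := by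
        rw [hy]
        nth_rewrite 1 [hx1]
        rw [← Finset.sum_sub_distrib]
        exact Finset.sum_congr rfl fun i _ => (smul_sub _ _ _).symm
      rw [dist_eq_norm, hxy]
      refine (norm_sum_le _ _).trans ?_
      rw [Finset.sum_mul]
      refine Finset.sum_le_sum fun i _ => ?_
      rw [norm_smul]
      have hri : ‖r i‖ ≤ ‖x‖ := by
        rw [hr, Real.norm_eq_abs]
        calc |(inner ℝ (c (φ k) i) x : ℝ)| ≤ ‖c (φ k) i‖ * ‖x‖ := abs_real_inner_le_norm _ _
          _ = ‖x‖ := by rw [(hcon (φ k)).1 i, one_mul]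
      calc ‖r i‖ * ‖c (φ k) i - v i‖ ≤ ‖x‖ * ‖c (φ k) i - v i‖ :=
            mul_le_mul_of_nonneg_right hri (norm_nonneg _)
        _ = ‖c (φ k) i - v i‖ * ‖x‖ := mul_comm _ _
    have : infDist x (Submodule.span ℝ (Set.range v) : Set X) ≤ dist x y :=
      infDist_le_dist_of_mem hyV
    refine this.trans (hdist.trans ?_)
    have := hx1  -- not needed
    exact mul_le_mul_of_nonneg_right hk.le (norm_nonneg x)

set_option maxHeartbeats 1000000 in
/-- The main iteration: there is no sequence of subspaces `F k ≤ E k` of constant dimension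
whose measures accumulate at `≥ a`, if every subspace of measure `≥ a` lies below only
finitely many of the `E k`. -/
lemma iter (μ : Measure X) [IsProbabilityMeasure μ] (a : ℝ) :
    ∀ d : ℕ, ∀ E F : ℕ → Submodule ℝ X, (∀ k, F k ≤ E k) → (∀ k, finrank ℝ (F k) = d) →
    (∀ W : Submodule ℝ X, ENNReal.ofReal a ≤ μ (W : Set X) → {k | W ≤ E k}.Finite) →
    (∀ b, b < ENNReal.ofReal a → ∀ᶠ k in atTop, b < μ (F k : Set X)) → False := by
  intro d
  induction d using Nat.strong_induction_on with
  | _ d IH =>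
  intro E F hle hrank hInj hb
  obtain ⟨φ, hφ, V, hVrank, hconv⟩ := extract F d hrank
  -- the limit subspace has measure at least a
  have hV : ENNReal.ofReal a ≤ μ (V : Set X) := by
    by_contra hcon
    push_neg at hcon
    obtain ⟨b, hb1, hb2⟩ := exists_between hcon
    have hle' : ∀ m : ℕ, b ≤ μ (cone V (1 / (m + 1))) := by
      intro m
      have h1 := hφ.tendsto_atTop.eventually (hb b hb2)
      have h2 := hconv (1 / (m + 1)) (by positivity)
      obtain ⟨k, hk1, hk2⟩ := (h1.and h2).exists
      exact hk1.le.trans (measure_mono hk2)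
    have hbV : b ≤ μ (V : Set X) :=
      ge_of_tendsto' (tendsto_measure_cone μ V) hle'
    exact absurd hbV (not_le.2 hb1)
  by_cases hA : {k | F (φ k) = V}.Infinite
  · -- infinitely many indices where `F (φ k) = V`, contradicting finiteness
    have hsub : φ '' {k | F (φ k) = V} ⊆ {j | V ≤ E j} := by
      rintro j ⟨k, hk, rfl⟩
      rw [Set.mem_setOf_eq, ← hk]
      exact hle _
    exact Set.not_infinite.2 (hInj V hV) ((hA.image (hφ.injective.injOn)).mono hsub)
  · rw [Set.not_infinite] at hA
    have hev : ∀ᶠ k in atTop, F (φ k) ≠ V := by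
      have := Set.Finite.eventually_cofinite_notMem hA
      rwa [Nat.cofinite_eq_atTop] at this
    obtain ⟨N, hN⟩ := eventually_atTop.1 hev
    set φ' : ℕ → ℕ := fun k => φ (k + N) with hφ'def
    have hφ'm : StrictMono φ' := hφ.comp fun a b h => by omega
    have hne : ∀ k, F (φ' k) ≠ V := fun k => hN (k + N) (by omega)
    set F' : ℕ → Submodule ℝ X := fun k => F (φ' k) ⊓ V with hF'def
    have hlt : ∀ k, F' k < F (φ' k) := by
      intro k
      refine lt_of_le_of_ne inf_le_left fun h => ?_
      have h2 : F (φ' k) ≤ V := by rw [← h]; exact inf_le_right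
      exact hne k (Submodule.eq_of_le_of_finrank_eq h2 (by rw [hrank, hVrank]))
    have hr' : ∀ k, finrank ℝ (F' k) < d :=
      fun k => hrank (φ' k) ▸ Submodule.finrank_lt_finrank_of_lt (hlt k)
    -- pigeonhole to get a constant-dimension subsequence
    have hfreq : ∃ d' < d, ∃ᶠ k in atTop, finrank ℝ (F' k) = d' := by
      by_contra h
      push_neg at h
      have hall : ∀ᶠ k in atTop, ∀ j ∈ Finset.range d, finrank ℝ (F' k) ≠ j :=
        (Finset.range d).eventually_all.2 fun j hj =>
          h j (Finset.mem_range.1 hj)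
      obtain ⟨k, hk⟩ := hall.exists
      exact hk _ (Finset.mem_range.2 (hr' k)) rfl
    obtain ⟨d', hd', hfr⟩ := hfreq
    obtain ⟨ψ, hψ, hψr⟩ := extraction_of_frequently_atTop hfr
    -- the measures along the new sequence still accumulate at ≥ a
    have hb' : ∀ b, b < ENNReal.ofReal a → ∀ᶠ k in atTop, b < μ (F' (ψ k) : Set X) := by
      intro b hbb
      have hbne : b ≠ ⊤ := ne_top_of_lt hbb
      have h0 := tendsto_measure_cone_diff μ V
      have hpos : (0 : ENNReal) < ENNReal.ofReal a - b := tsub_pos_of_lt hbb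
      obtain ⟨m, hm⟩ := (h0.eventually_lt_const hpos).exists
      set cm := μ (cone V (1 / (m + 1)) \ (V : Set X)) with hcm
      have hcne : cm ≠ ⊤ := measure_ne_top μ _
      have hba : b + cm < ENNReal.ofReal a := by
        calc b + cm < b + (ENNReal.ofReal a - b) := ENNReal.add_lt_add_left hbne hm
          _ = ENNReal.ofReal a := add_tsub_cancel_of_le hbb.le
      have h1 : ∀ᶠ k in atTop, b + cm < μ (F (φ' (ψ k)) : Set X) :=
        (hφ'm.tendsto_atTop.comp hψ.tendsto_atTop).eventually (hb _ hba)
      have h2 : ∀ᶠ k in atTop, (F (φ' (ψ k)) : Set X) ⊆ cone V (1 / (m + 1)) := by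
        have h2a := hconv (1 / (m + 1)) (by positivity)
        have hsm : StrictMono fun k => ψ k + N := fun p q hpq => by
          simp only []
          have := hψ hpq; omega
        exact hsm.tendsto_atTop.eventually h2a
      filter_upwards [h1, h2] with k hk1 hk2
      have hsub2 : (F (φ' (ψ k)) : Set X) ⊆
          (F' (ψ k) : Set X) ∪ (cone V (1 / (m + 1)) \ (V : Set X)) := by
        intro x hx
        by_cases hxV : x ∈ (V : Set X)
        · exact Or.inl (Submodule.mem_inf.2 ⟨hx, hxV⟩)
        · exact Or.inr ⟨hk2 hx, hxV⟩
      have hμle : μ (F (φ' (ψ k)) : Set X) ≤ μ (F' (ψ k) : Set X) + cm :=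
        (measure_mono hsub2).trans (measure_union_le _ _)
      have := lt_of_lt_of_le hk1 hμle
      exact (ENNReal.add_lt_add_iff_right hcne).1 this
    -- recurse
    refine IH d' hd' (fun k => E (φ' (ψ k))) (fun k => F' (ψ k))
      (fun k => (hlt (ψ k)).le.trans (hle _)) (fun k => hψr k) ?_ hb'
    intro W hW
    have : {k | W ≤ E (φ' (ψ k))} = (φ' ∘ ψ) ⁻¹' {j | W ≤ E j} := rfl
    rw [this]
    exact (hInj W hW).preimage ((hφ'm.comp hψ).injective.injOn)

end Stmt16Aux

/-- For a Borel probability measure on `ℝⁿ` and `0 < a ≤ 1`, there are only finitely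
many `a`-basic subspaces. -/
theorem stmt16 {n : ℕ} (hn : 1 ≤ n) (a : ℝ) (ha0 : 0 < a) (ha1 : a ≤ 1)
    (μ : Measure (EuclideanSpace ℝ (Fin n))) [IsProbabilityMeasure μ] :
    {E : Submodule ℝ (EuclideanSpace ℝ (Fin n)) | IsBasic μ a E}.Finite := by
  classical
  by_contra hinf
  replace hinf : Set.Infinite {E : Submodule ℝ (EuclideanSpace ℝ (Fin n)) | IsBasic μ a E} := hinf
  set S := {E : Submodule ℝ (EuclideanSpace ℝ (Fin n)) | IsBasic μ a E} with hS
  have hsub : S ⊆ ⋃ d ∈ Finset.range (n + 1),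
      {E | E ∈ S ∧ Module.finrank ℝ E = d} := by
    intro E hE
    refine Set.mem_biUnion (Finset.mem_range.2 ?_) ⟨hE, rfl⟩
    have h1 := Submodule.finrank_le E
    rw [finrank_euclideanSpace_fin] at h1
    omega
  have hex : ∃ d ∈ Finset.range (n + 1),
      {E | E ∈ S ∧ Module.finrank ℝ E = d}.Infinite := by
    by_contra h
    push_neg at h
    refine hinf (Set.Finite.subset ?_ hsub)
    exact Set.Finite.biUnion (Finset.range (n + 1)).finite_toSet
      fun d hd => h d hd
  obtain ⟨d, -, hd⟩ := hex
  let e := hd.natEmbedding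
  set E : ℕ → Submodule ℝ (EuclideanSpace ℝ (Fin n)) := fun k => (e k : _) with hE
  have hEinj : Function.Injective E := fun k1 k2 h => e.injective (Subtype.coe_injective h)
  have hbasic : ∀ k, IsBasic μ a (E k) := fun k => (e k).2.1
  have hErank : ∀ k, Module.finrank ℝ (E k) = d := fun k => (e k).2.2
  refine Stmt16Aux.iter μ a d E E (fun k => le_rfl) hErank ?_ ?_
  · intro W hW
    have hsub2 : {k | W ≤ E k} ⊆ {k | W = E k} := by
      intro k hk
      simp only [Set.mem_setOf_eq] at hk ⊢
      rcases hk.lt_or_eq with hlt | heq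
      · exact absurd ((hbasic k).2 W hlt) (not_lt.2 hW)
      · exact heq
    refine (Set.Finite.subset ?_ hsub2)
    apply Set.Subsingleton.finite
    intro k1 hk1 k2 hk2
    exact hEinj (hk1.symm.trans hk2)
  · intro b hbb
    exact Filter.Eventually.of_forall fun k => lt_of_lt_of_le hbb (hbasic k).1
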